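/- Let u_T : ℝ → ℝ be Lipschitz. Then there exists a Lipschitz function u0 : ℝ → ℝ with S_T^+ u0 = u_T (i.e. I_T(u_T) is nonempty) if and only if u_T satisfies the inequality ∂ₓₓu_T − (T·H''(∂ₓu_T))⁻¹ ≤ 0 on ℝ in the viscosity sense. -/

import Mathlib

set_option maxHeartbeats 1000000


open Filter

noncomputable section

/-- A real function is Lipschitz (with some constant). -/
def IsLip1 (f : ℝ → ℝ) : Prop := ∃ K : NNReal, LipschitzWith K f

/-- The Legendre transform `L(q) = sup_p (q·p - H(p))`. -/
def legendre1 (H : ℝ → ℝ) (q : ℝ) : ℝ := ⨆ p : ℝ, (q * p - H p)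

/-- The forward Hopf–Lax operator `(S_T^+ g)(x) = inf_y [g(y) + T·L((x-y)/T)]`. -/
def Splus1 (T : ℝ) (L : ℝ → ℝ) (g : ℝ → ℝ) (x : ℝ) : ℝ :=
  ⨅ y : ℝ, (g y + T * L ((x - y) / T))

/-- The backward operator `(S_T^- g)(x) = sup_y [g(y) - T·L((y-x)/T)]`. -/
def Sminus1 (T : ℝ) (L : ℝ → ℝ) (g : ℝ → ℝ) (x : ℝ) : ℝ :=
  ⨆ y : ℝ, (g y - T * L ((y - x) / T))

/-- `u_T` satisfies `∂ₓₓ u_T - (T·H''(∂ₓ u_T))⁻¹ ≤ 0` on `ℝ` in the viscosity sense: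
for every `C²` test function `φ` and every local minimum point `x0` of `u_T - φ`,
`φ''(x0) ≤ 1/(T·H''(φ'(x0)))`. -/
def ViscIneq1 (T : ℝ) (H : ℝ → ℝ) (uT : ℝ → ℝ) : Prop :=
  ∀ φ : ℝ → ℝ, ContDiff ℝ 2 φ → ∀ x0 : ℝ,
    IsLocalMin (fun x => uT x - φ x) x0 →
    deriv (deriv φ) x0 ≤ 1 / (T * deriv (deriv H) (deriv φ x0))

open Set

namespace Aux1D

/-- Second derivative test at a local minimum. -/
theorem second_deriv_test {f g : ℝ → ℝ} {a b : ℝ}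
    (hf : ∀ x, HasDerivAt f (g x) x) (hg : HasDerivAt g b a)
    (h : IsLocalMin f a) : g a = 0 ∧ 0 ≤ b := by
  have hga : g a = 0 := h.hasDerivAt_eq_zero (hf a)
  refine ⟨hga, ?_⟩
  by_contra hb
  push_neg at hb
  -- slope of g at a tends to b < 0, so g < 0 just to the right of a
  have hslope : Tendsto (slope g a) (nhdsWithin a {a}ᶜ) (nhds b) :=
    hasDerivAt_iff_tendsto_slope.mp hg
  have hev : ∀ᶠ x in nhdsWithin a {a}ᶜ, slope g a x < b / 2 :=
    hslope.eventually (eventually_lt_nhds (by linarith))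
  have hev' : ∀ᶠ x in nhdsWithin a (Ioi a), slope g a x < b / 2 :=
    hev.filter_mono (nhdsWithin_mono a (fun x hx => ne_of_gt hx))
  rw [eventually_nhdsWithin_iff] at hev'
  obtain ⟨δ, hδpos, hδ⟩ := Metric.eventually_nhds_iff.mp hev'
  -- on (a, a+δ), g < 0
  have hgneg : ∀ x ∈ Ioo a (a + δ), g x < 0 := by
    intro x hx
    have hd : dist x a < δ := by
      rw [Real.dist_eq, abs_of_pos (by linarith [hx.1])]
      linarith [hx.2]
    have := hδ hd hx.1
    have hs : slope g a x = g x / (x - a) := by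
      rw [slope_def_field, hga]; ring
    rw [hs] at this
    have hxa : 0 < x - a := by linarith [hx.1]
    have h3 : g x < b / 2 * (x - a) := (div_lt_iff₀ hxa).mp this
    nlinarith
  -- f is strictly decreasing on [a, a+δ]
  have hanti : StrictAntiOn f (Icc a (a + δ)) := by
    apply strictAntiOn_of_deriv_neg (convex_Icc _ _)
    · have hdf : Differentiable ℝ f := fun x => (hf x).differentiableAt
      exact Continuous.continuousOn hdf.continuous
    · intro x hx
      rw [interior_Icc] at hx
      rw [(hf x).deriv]
      exact hgneg x hx
  -- contradiction with local min
  obtain ⟨δ', hδ'pos, hδ'⟩ := Metric.eventually_nhds_iff.mp h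
  have hm1 : min δ δ' ≤ δ := min_le_left _ _
  have hm2 : min δ δ' ≤ δ' := min_le_right _ _
  have hmin : 0 < min δ δ' := lt_min hδpos hδ'pos
  have hax : a < a + min δ δ' / 2 := by linarith
  have h1 : f (a + min δ δ' / 2) < f a := by
    apply hanti (left_mem_Icc.mpr (by linarith)) ⟨by linarith, by linarith⟩ hax
  have h2 : f a ≤ f (a + min δ δ' / 2) := by
    apply hδ'
    rw [Real.dist_eq, abs_of_pos (by linarith)]
    linarith
  linarith

section Inverse

variable {f f' : ℝ → ℝ}

theorem invFun_rightInv (hsurj : Function.Surjective f) (y : ℝ) :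
    f (Function.invFun f y) = y := Function.invFun_eq (hsurj y)

theorem invFun_leftInv (hmono : StrictMono f) (x : ℝ) :
    Function.invFun f (f x) = x := Function.leftInverse_invFun hmono.injective x

theorem invFun_strictMono (hmono : StrictMono f) (hsurj : Function.Surjective f) :
    StrictMono (Function.invFun f) := by
  intro a b hab
  rcases lt_trichotomy (Function.invFun f a) (Function.invFun f b) with h | h | h
  · exact h
  · exfalso; rw [← invFun_rightInv hsurj a, ← invFun_rightInv hsurj b, h] at hab
    exact lt_irrefl _ hab
  · exfalso
    have := hmono h
    rw [invFun_rightInv hsurj a, invFun_rightInv hsurj b] at this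
    exact absurd hab (not_lt.mpr this.le)

theorem invFun_continuous (hmono : StrictMono f) (hsurj : Function.Surjective f) :
    Continuous (Function.invFun f) := by
  have e := StrictMono.orderIsoOfSurjective f hmono hsurj
  have hcoe : ∀ x, (StrictMono.orderIsoOfSurjective f hmono hsurj) x = f x := fun x => rfl
  have heq : Function.invFun f = ⇑(StrictMono.orderIsoOfSurjective f hmono hsurj).symm := by
    funext y
    apply hmono.injective
    rw [invFun_rightInv hsurj y]
    have := (StrictMono.orderIsoOfSurjective f hmono hsurj).apply_symm_apply y
    rw [← hcoe]
    exact this.symm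
  rw [heq]
  exact ((StrictMono.orderIsoOfSurjective f hmono hsurj).symm.toHomeomorph).continuous

theorem invFun_hasDerivAt (hmono : StrictMono f) (hsurj : Function.Surjective f)
    {y d : ℝ} (hd : HasDerivAt f d (Function.invFun f y)) (hd0 : d ≠ 0) :
    HasDerivAt (Function.invFun f) d⁻¹ y := by
  apply HasDerivAt.of_local_left_inverse ((invFun_continuous hmono hsurj).continuousAt) hd hd0
  exact Eventually.of_forall (invFun_rightInv hsurj)

end Inverse

/-- Subgradient inequality for a function with monotone derivative. -/
theorem convex_subgradient {f f' : ℝ → ℝ} (hd : ∀ x, HasDerivAt f (f' x) x)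
    (hmono : Monotone f') (a b : ℝ) : f a + f' a * (b - a) ≤ f b := by
  rcases lt_trichotomy a b with h | h | h
  · obtain ⟨c, hc, hceq⟩ := exists_hasDerivAt_eq_slope f f' h
      (Continuous.continuousOn (Differentiable.continuous (fun x => (hd x).differentiableAt)))
      (fun x _ => hd x)
    have h1 : f' a ≤ f' c := hmono hc.1.le
    rw [eq_div_iff (by intro hh; rw [sub_eq_zero] at hh; exact absurd hh.symm (ne_of_lt h)) ] at hceq
    nlinarith
  · simp [h]
  · obtain ⟨c, hc, hceq⟩ := exists_hasDerivAt_eq_slope f f' h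
      (Continuous.continuousOn (Differentiable.continuous (fun x => (hd x).differentiableAt)))
      (fun x _ => hd x)
    have h1 : f' c ≤ f' a := hmono hc.2.le
    rw [eq_div_iff (by intro hh; rw [sub_eq_zero] at hh; exact absurd hh.symm (ne_of_lt h))] at hceq
    nlinarith

/-- `q ↦ f (q + δ) - f q` is monotone when `f'` is monotone and `0 ≤ δ`. -/
theorem convex_slide {f f' : ℝ → ℝ} (hd : ∀ x, HasDerivAt f (f' x) x)
    (hmono : Monotone f') {δ : ℝ} (hδ : 0 ≤ δ) :
    Monotone (fun q => f (q + δ) - f q) := by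
  have hD : ∀ q, HasDerivAt (fun q => f (q + δ) - f q) (f' (q + δ) - f' q) q := by
    intro q
    have h1 : HasDerivAt (fun q : ℝ => f (q + δ)) (f' (q + δ) * 1) q :=
      HasDerivAt.comp q (hd (q + δ)) ((hasDerivAt_id q).add_const δ)
    have h2 := h1.sub (hd q)
    rw [mul_one] at h2
    exact h2
  apply monotone_of_deriv_nonneg
  · exact fun q => (hD q).differentiableAt
  · intro q
    rw [(hD q).deriv]
    have := hmono (by linarith : q ≤ q + δ)
    linarith


/-- The inverse of `H'`. -/
def Pfun (H : ℝ → ℝ) : ℝ → ℝ := Function.invFun (deriv H)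

section Legendre

variable {H : ℝ → ℝ}

theorem contDiff_one_derivH (hH : ContDiff ℝ 2 H) : ContDiff ℝ 1 (deriv H) := by
  have h2 : ContDiff ℝ (1 + 1 : ℕ) H := by exact_mod_cast hH
  rw [show ((1 + 1 : ℕ) : WithTop ℕ∞) = ((1 : ℕ∞) + 1) by norm_num] at h2
  exact (contDiff_succ_iff_deriv.mp h2).2.2

theorem hasDerivAt_H (hH : ContDiff ℝ 2 H) (p : ℝ) : HasDerivAt H (deriv H p) p :=
  ((hH.differentiable (by norm_num)) p).hasDerivAt

theorem hasDerivAt_derivH (hH : ContDiff ℝ 2 H) (p : ℝ) :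
    HasDerivAt (deriv H) (deriv (deriv H) p) p :=
  (((contDiff_one_derivH hH).differentiable (by norm_num)) p).hasDerivAt

theorem continuous_derivH (hH : ContDiff ℝ 2 H) : Continuous (deriv H) :=
  ((contDiff_one_derivH hH).differentiable (by norm_num)).continuous

theorem continuous_derivH2 (hH : ContDiff ℝ 2 H) : Continuous (deriv (deriv H)) :=
  (contDiff_one_iff_deriv.mp (contDiff_one_derivH hH)).2

theorem strictMono_derivH (hc : ∀ p, 0 < deriv (deriv H) p) : StrictMono (deriv H) :=
  strictMono_of_deriv_pos hc

theorem tendsto_atTop_cocompact {f : ℝ → ℝ} (h : Tendsto f (cocompact ℝ) atTop) :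
    Tendsto f atTop atTop := h.mono_left (by rw [cocompact_eq_atBot_atTop]; exact le_sup_right)

theorem tendsto_atBot_cocompact {f : ℝ → ℝ} (h : Tendsto f (cocompact ℝ) atTop) :
    Tendsto f atBot atTop := h.mono_left (by rw [cocompact_eq_atBot_atTop]; exact le_sup_left)

theorem derivH_unbounded_above (hH : ContDiff ℝ 2 H)
    (hsup : Tendsto (fun p : ℝ => H p / |p|) (cocompact ℝ) atTop) :
    ∀ b : ℝ, ∃ a, b ≤ deriv H a := by
  intro b
  by_contra hcon
  push_neg at hcon
  have hb : ∀ x : ℝ, 0 < x → H x < H 0 + b * x := by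
    intro x hx
    obtain ⟨c, _, hceq⟩ := exists_hasDerivAt_eq_slope H (deriv H) hx
      (Continuous.continuousOn (hH.continuous)) (fun y _ => hasDerivAt_H hH y)
    rw [eq_div_iff (by linarith)] at hceq
    have := hcon c
    nlinarith
  have htop : Tendsto (fun p : ℝ => H p / |p|) atTop atTop := tendsto_atTop_cocompact hsup
  have hev : ∀ᶠ x : ℝ in atTop, |H 0| + |b| + 1 ≤ H x / |x| :=
    htop.eventually_ge_atTop _
  obtain ⟨x, hx1, hx2⟩ := (hev.and (eventually_ge_atTop (1 : ℝ))).exists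
  have hxpos : (0:ℝ) < x := by linarith
  rw [abs_of_pos hxpos] at hx1
  have h2 : (|H 0| + |b| + 1) * x ≤ H x := (le_div_iff₀ hxpos).mp hx1
  have hb' := hb x hxpos
  nlinarith [le_abs_self (H 0), le_abs_self b, abs_nonneg (H 0), abs_nonneg b]

theorem derivH_unbounded_below (hH : ContDiff ℝ 2 H)
    (hsup : Tendsto (fun p : ℝ => H p / |p|) (cocompact ℝ) atTop) :
    ∀ b : ℝ, ∃ a, deriv H a ≤ b := by
  intro b
  by_contra hcon
  push_neg at hcon
  have hb : ∀ x : ℝ, x < 0 → H x < H 0 + b * x := by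
    intro x hx
    obtain ⟨c, _, hceq⟩ := exists_hasDerivAt_eq_slope H (deriv H) (show x < 0 from hx)
      (Continuous.continuousOn (hH.continuous)) (fun y _ => hasDerivAt_H hH y)
    rw [eq_div_iff (by linarith)] at hceq
    have := hcon c
    nlinarith
  have htop : Tendsto (fun p : ℝ => H p / |p|) atBot atTop := tendsto_atBot_cocompact hsup
  have hev : ∀ᶠ x : ℝ in atBot, |H 0| + |b| + 1 ≤ H x / |x| :=
    htop.eventually_ge_atTop _
  obtain ⟨x, hx1, hx2⟩ := (hev.and (eventually_le_atBot (-1 : ℝ))).exists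
  have hxneg : x < 0 := by linarith
  rw [abs_of_neg hxneg] at hx1
  have hnx : (0:ℝ) < -x := by linarith
  have h2 : (|H 0| + |b| + 1) * (-x) ≤ H x := (le_div_iff₀ hnx).mp hx1
  have hb' := hb x hxneg
  nlinarith [le_abs_self (H 0), le_abs_self b, abs_nonneg (H 0), abs_nonneg b,
    neg_abs_le b]

theorem derivH_surjective (hH : ContDiff ℝ 2 H) (hc : ∀ p, 0 < deriv (deriv H) p)
    (hsup : Tendsto (fun p : ℝ => H p / |p|) (cocompact ℝ) atTop) :
    Function.Surjective (deriv H) := by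
  apply Continuous.surjective (continuous_derivH hH)
  · exact tendsto_atTop_atTop_of_monotone (strictMono_derivH hc).monotone
      (derivH_unbounded_above hH hsup)
  · exact tendsto_atBot_atBot_of_monotone (strictMono_derivH hc).monotone
      (derivH_unbounded_below hH hsup)

end Legendre

section Legendre2

variable {H : ℝ → ℝ}

local notation "HYP" => True

theorem P_right (hH : ContDiff ℝ 2 H) (hc : ∀ p, 0 < deriv (deriv H) p)
    (hsup : Tendsto (fun p : ℝ => H p / |p|) (cocompact ℝ) atTop) : ∀ q, deriv H (Pfun H q) = q :=
  fun q => invFun_rightInv (derivH_surjective hH hc hsup) q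

theorem P_left (hH : ContDiff ℝ 2 H) (hc : ∀ p, 0 < deriv (deriv H) p)
    (hsup : Tendsto (fun p : ℝ => H p / |p|) (cocompact ℝ) atTop) : ∀ p, Pfun H (deriv H p) = p :=
  fun p => invFun_leftInv (strictMono_derivH hc) p

theorem P_mono (hH : ContDiff ℝ 2 H) (hc : ∀ p, 0 < deriv (deriv H) p)
    (hsup : Tendsto (fun p : ℝ => H p / |p|) (cocompact ℝ) atTop) : StrictMono (Pfun H) :=
  invFun_strictMono (strictMono_derivH hc) (derivH_surjective hH hc hsup)

theorem P_cont (hH : ContDiff ℝ 2 H) (hc : ∀ p, 0 < deriv (deriv H) p)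
    (hsup : Tendsto (fun p : ℝ => H p / |p|) (cocompact ℝ) atTop) : Continuous (Pfun H) :=
  invFun_continuous (strictMono_derivH hc) (derivH_surjective hH hc hsup)

theorem P_hasDerivAt (hH : ContDiff ℝ 2 H) (hc : ∀ p, 0 < deriv (deriv H) p)
    (hsup : Tendsto (fun p : ℝ => H p / |p|) (cocompact ℝ) atTop) (q : ℝ) :
    HasDerivAt (Pfun H) (deriv (deriv H) (Pfun H q))⁻¹ q :=
  invFun_hasDerivAt (strictMono_derivH hc) (derivH_surjective hH hc hsup)
    (hasDerivAt_derivH hH _) (ne_of_gt (hc _))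

/-- Subgradient inequality for `H`. -/
theorem H_subgrad (hH : ContDiff ℝ 2 H) (hc : ∀ p, 0 < deriv (deriv H) p)
    (hsup : Tendsto (fun p : ℝ => H p / |p|) (cocompact ℝ) atTop) (a b : ℝ) : H a + deriv H a * (b - a) ≤ H b :=
  convex_subgradient (hasDerivAt_H hH) (strictMono_derivH hc).monotone a b

theorem legendre_eq (hH : ContDiff ℝ 2 H) (hc : ∀ p, 0 < deriv (deriv H) p)
    (hsup : Tendsto (fun p : ℝ => H p / |p|) (cocompact ℝ) atTop) (q : ℝ) :
    legendre1 H q = q * Pfun H q - H (Pfun H q) := by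
  have hub : ∀ p, q * p - H p ≤ q * Pfun H q - H (Pfun H q) := by
    intro p
    have := H_subgrad hH hc hsup (Pfun H q) p
    rw [P_right hH hc hsup] at this
    nlinarith
  apply le_antisymm
  · exact ciSup_le hub
  · exact le_ciSup ⟨q * Pfun H q - H (Pfun H q), fun x ⟨p, hp⟩ => hp ▸ hub p⟩ (Pfun H q)

theorem legendre_lb (hH : ContDiff ℝ 2 H) (hc : ∀ p, 0 < deriv (deriv H) p)
    (hsup : Tendsto (fun p : ℝ => H p / |p|) (cocompact ℝ) atTop) (q p : ℝ) : q * p - H p ≤ legendre1 H q := by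
  rw [legendre_eq hH hc hsup]
  have := H_subgrad hH hc hsup (Pfun H q) p
  rw [P_right hH hc hsup] at this
  nlinarith

theorem legendre_hasDerivAt (hH : ContDiff ℝ 2 H) (hc : ∀ p, 0 < deriv (deriv H) p)
    (hsup : Tendsto (fun p : ℝ => H p / |p|) (cocompact ℝ) atTop) (q : ℝ) :
    HasDerivAt (legendre1 H) (Pfun H q) q := by
  have heq : legendre1 H = fun q => q * Pfun H q - H (Pfun H q) :=
    funext (legendre_eq hH hc hsup)
  rw [heq]
  have hP := P_hasDerivAt hH hc hsup q
  have h1 : HasDerivAt (fun q => q * Pfun H q) (1 * Pfun H q + q * (deriv (deriv H) (Pfun H q))⁻¹) q :=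
    (hasDerivAt_id q).mul hP
  have h2 : HasDerivAt (fun q => H (Pfun H q)) (deriv H (Pfun H q) * (deriv (deriv H) (Pfun H q))⁻¹) q :=
    HasDerivAt.comp q (hasDerivAt_H hH _) hP
  have h3 := h1.sub h2
  refine h3.congr_deriv ?_
  rw [P_right hH hc hsup]
  ring

theorem legendre_cont (hH : ContDiff ℝ 2 H) (hc : ∀ p, 0 < deriv (deriv H) p)
    (hsup : Tendsto (fun p : ℝ => H p / |p|) (cocompact ℝ) atTop) : Continuous (legendre1 H) :=
  Differentiable.continuous (fun q => (legendre_hasDerivAt hH hc hsup q).differentiableAt)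

theorem deriv_legendre (hH : ContDiff ℝ 2 H) (hc : ∀ p, 0 < deriv (deriv H) p)
    (hsup : Tendsto (fun p : ℝ => H p / |p|) (cocompact ℝ) atTop) : deriv (legendre1 H) = Pfun H :=
  funext fun q => (legendre_hasDerivAt hH hc hsup q).deriv

theorem P_contDiff (hH : ContDiff ℝ 2 H) (hc : ∀ p, 0 < deriv (deriv H) p)
    (hsup : Tendsto (fun p : ℝ => H p / |p|) (cocompact ℝ) atTop) : ContDiff ℝ 1 (Pfun H) := by
  rw [contDiff_one_iff_deriv]
  constructor
  · exact fun q => (P_hasDerivAt hH hc hsup q).differentiableAt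
  · have : deriv (Pfun H) = fun q => (deriv (deriv H) (Pfun H q))⁻¹ :=
      funext fun q => (P_hasDerivAt hH hc hsup q).deriv
    rw [this]
    exact ((continuous_derivH2 hH).comp (P_cont hH hc hsup)).inv₀
      (fun q => ne_of_gt (hc _))

theorem legendre_contDiff (hH : ContDiff ℝ 2 H) (hc : ∀ p, 0 < deriv (deriv H) p)
    (hsup : Tendsto (fun p : ℝ => H p / |p|) (cocompact ℝ) atTop) : ContDiff ℝ 2 (legendre1 H) := by
  have h2 : ContDiff ℝ ((1 : ℕ∞) + 1) (legendre1 H) := by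
    rw [contDiff_succ_iff_deriv]
    refine ⟨fun q => (legendre_hasDerivAt hH hc hsup q).differentiableAt, ?_, ?_⟩
    · intro h; exact absurd h (by norm_num)
    · rw [deriv_legendre hH hc hsup]; exact P_contDiff hH hc hsup
  exact_mod_cast h2

/-- Subgradient inequality for `legendre1 H`. -/
theorem L_subgrad (hH : ContDiff ℝ 2 H) (hc : ∀ p, 0 < deriv (deriv H) p)
    (hsup : Tendsto (fun p : ℝ => H p / |p|) (cocompact ℝ) atTop) (a b : ℝ) :
    legendre1 H a + Pfun H a * (b - a) ≤ legendre1 H b :=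
  convex_subgradient (legendre_hasDerivAt hH hc hsup) (P_mono hH hc hsup).monotone a b

/-- superlinearity-type lower bound: `L q ≥ (k+1)|q| - max (H (k+1)) (H (-(k+1)))`. -/
theorem legendre_superlinear (hH : ContDiff ℝ 2 H) (hc : ∀ p, 0 < deriv (deriv H) p)
    (hsup : Tendsto (fun p : ℝ => H p / |p|) (cocompact ℝ) atTop) (k q : ℝ) :
    (k+1) * |q| - max (H (k+1)) (H (-(k+1))) ≤ legendre1 H q := by
  rcases le_or_gt 0 q with hq | hq
  · have := legendre_lb hH hc hsup q (k+1)
    rw [abs_of_nonneg hq]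
    have : H (k+1) ≤ max (H (k+1)) (H (-(k+1))) := le_max_left _ _
    nlinarith [legendre_lb hH hc hsup q (k+1)]
  · have := legendre_lb hH hc hsup q (-(k+1))
    rw [abs_of_neg hq]
    have h2 : H (-(k+1)) ≤ max (H (k+1)) (H (-(k+1))) := le_max_right _ _
    nlinarith [legendre_lb hH hc hsup q (-(k+1))]

end Legendre2

section Cone

variable {T : ℝ} {H : ℝ → ℝ}

/-- Cone through `(x0, uT x0)` with slope `p` at `x0`. -/
def cone1 (T : ℝ) (H uT : ℝ → ℝ) (x0 p x : ℝ) : ℝ :=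
  uT x0 + T * (legendre1 H ((x - x0)/T + deriv H p) - legendre1 H (deriv H p))

/-- Every point admits a globally touching cone from above. -/
def Star1 (T : ℝ) (H uT : ℝ → ℝ) : Prop :=
  ∀ x0 : ℝ, ∃ y : ℝ, ∀ z : ℝ,
    uT z ≤ uT x0 + T * legendre1 H ((z - y)/T) - T * legendre1 H ((x0 - y)/T)

theorem cone_at (uT : ℝ → ℝ) (x0 p : ℝ) : cone1 T H uT x0 p x0 = uT x0 := by
  simp [cone1]

theorem affine_hasDerivAt (hT : 0 < T) (y x : ℝ) :
    HasDerivAt (fun x => (x - y)/T) (1/T) x := by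
  simpa using ((hasDerivAt_id x).sub_const y).div_const T

theorem shifted_legendre_hasDerivAt (hT : 0 < T) (hH : ContDiff ℝ 2 H)
    (hc : ∀ p, 0 < deriv (deriv H) p)
    (hsup : Tendsto (fun p : ℝ => H p / |p|) (cocompact ℝ) atTop)
    (a b y x : ℝ) :
    HasDerivAt (fun x => a + T * legendre1 H ((x - y)/T) - b) (Pfun H ((x - y)/T)) x := by
  have h1 : HasDerivAt (fun x => legendre1 H ((x - y)/T)) (Pfun H ((x - y)/T) * (1/T)) x :=
    HasDerivAt.comp x (legendre_hasDerivAt hH hc hsup _) (affine_hasDerivAt hT y x)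
  have h2 := ((h1.const_mul T).const_add a).sub_const b
  refine h2.congr_deriv ?_
  field_simp

theorem cone_hasDerivAt (hT : 0 < T) (hH : ContDiff ℝ 2 H)
    (hc : ∀ p, 0 < deriv (deriv H) p)
    (hsup : Tendsto (fun p : ℝ => H p / |p|) (cocompact ℝ) atTop)
    (uT : ℝ → ℝ) (x0 p x : ℝ) :
    HasDerivAt (cone1 T H uT x0 p) (Pfun H ((x - x0)/T + deriv H p)) x := by
  have h0 : HasDerivAt (fun x => (x - x0)/T + deriv H p) (1/T) x :=
    (affine_hasDerivAt hT x0 x).add_const _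
  have h1 : HasDerivAt (fun x => legendre1 H ((x - x0)/T + deriv H p))
      (Pfun H ((x - x0)/T + deriv H p) * (1/T)) x :=
    HasDerivAt.comp x (legendre_hasDerivAt hH hc hsup _) h0
  have h2 := ((h1.sub_const (legendre1 H (deriv H p))).const_mul T).const_add (uT x0)
  refine h2.congr_deriv ?_
  field_simp

theorem cone_cont (hT : 0 < T) (hH : ContDiff ℝ 2 H)
    (hc : ∀ p, 0 < deriv (deriv H) p)
    (hsup : Tendsto (fun p : ℝ => H p / |p|) (cocompact ℝ) atTop)
    (uT : ℝ → ℝ) (x0 p : ℝ) : Continuous (cone1 T H uT x0 p) :=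
  Differentiable.continuous fun x => (cone_hasDerivAt hT hH hc hsup uT x0 p x).differentiableAt

theorem cone_ge (hT : 0 < T) (hH : ContDiff ℝ 2 H)
    (hc : ∀ p, 0 < deriv (deriv H) p)
    (hsup : Tendsto (fun p : ℝ => H p / |p|) (cocompact ℝ) atTop)
    (uT : ℝ → ℝ) (x0 p x : ℝ) :
    uT x0 + p * (x - x0) ≤ cone1 T H uT x0 p x := by
  have h := L_subgrad hH hc hsup (deriv H p) ((x - x0)/T + deriv H p)
  rw [P_left hH hc hsup] at h
  have h2 : p * ((x - x0)/T) ≤ legendre1 H ((x - x0)/T + deriv H p) - legendre1 H (deriv H p) := by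
    have : (x - x0)/T + deriv H p - deriv H p = (x - x0)/T := by ring
    nlinarith [h, this]
  unfold cone1
  have hT' : T ≠ 0 := ne_of_gt hT
  have := mul_le_mul_of_nonneg_left h2 (le_of_lt hT)
  calc uT x0 + p * (x - x0) = uT x0 + T * (p * ((x - x0)/T)) := by field_simp
    _ ≤ _ := by linarith

theorem cone_mono_right (hT : 0 < T) (hH : ContDiff ℝ 2 H)
    (hc : ∀ p, 0 < deriv (deriv H) p)
    (hsup : Tendsto (fun p : ℝ => H p / |p|) (cocompact ℝ) atTop)
    (uT : ℝ → ℝ) {x0 p p' x : ℝ} (hx : x0 ≤ x) (hp : p ≤ p') :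
    cone1 T H uT x0 p x ≤ cone1 T H uT x0 p' x := by
  have hδ : 0 ≤ (x - x0)/T := div_nonneg (by linarith) (le_of_lt hT)
  have hs := convex_slide (legendre_hasDerivAt hH hc hsup) (P_mono hH hc hsup).monotone hδ
    ((strictMono_derivH hc).monotone hp)
  simp only at hs
  unfold cone1
  have : legendre1 H (deriv H p + (x - x0)/T) - legendre1 H (deriv H p)
      ≤ legendre1 H (deriv H p' + (x - x0)/T) - legendre1 H (deriv H p') := hs
  have harr : ∀ c : ℝ, (x - x0)/T + deriv H c = deriv H c + (x - x0)/T := fun c => by ring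
  rw [harr p, harr p']
  nlinarith [this]

theorem cone_anti_left (hT : 0 < T) (hH : ContDiff ℝ 2 H)
    (hc : ∀ p, 0 < deriv (deriv H) p)
    (hsup : Tendsto (fun p : ℝ => H p / |p|) (cocompact ℝ) atTop)
    (uT : ℝ → ℝ) {x0 p p' x : ℝ} (hx : x ≤ x0) (hp : p ≤ p') :
    cone1 T H uT x0 p' x ≤ cone1 T H uT x0 p x := by
  set δ := (x - x0)/T with hδdef
  have hδ : δ ≤ 0 := div_nonpos_of_nonpos_of_nonneg (by linarith) (le_of_lt hT)
  -- L q - L (q + δ) is monotone in q (apply convex_slide at shifted points with -δ ≥ 0)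
  have hs := convex_slide (legendre_hasDerivAt hH hc hsup) (P_mono hH hc hsup).monotone
    (show (0:ℝ) ≤ -δ by linarith)
    (show deriv H p + δ ≤ deriv H p' + δ by
      have := (strictMono_derivH hc).monotone hp; linarith)
  simp only at hs
  have harr : ∀ c : ℝ, deriv H c + δ + -δ = deriv H c := fun c => by ring
  rw [harr p, harr p'] at hs
  unfold cone1
  have harr2 : ∀ c : ℝ, (x - x0)/T + deriv H c = deriv H c + δ := fun c => by rw [hδdef]; ring
  rw [harr2 p, harr2 p']
  nlinarith [hs]

theorem cone_cont_p (hT : 0 < T) (hH : ContDiff ℝ 2 H)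
    (hc : ∀ p, 0 < deriv (deriv H) p)
    (hsup : Tendsto (fun p : ℝ => H p / |p|) (cocompact ℝ) atTop)
    (uT : ℝ → ℝ) (x0 x : ℝ) :
    Continuous (fun p => cone1 T H uT x0 p x) := by
  apply continuous_const.add
  apply continuous_const.mul
  apply Continuous.sub
  · exact (legendre_cont hH hc hsup).comp (continuous_const.add (continuous_derivH hH))
  · exact (legendre_cont hH hc hsup).comp (continuous_derivH hH)

end Cone

section Easy

variable {T : ℝ} {H uT : ℝ → ℝ}

theorem sminus_bound (hT : 0 < T) (hH : ContDiff ℝ 2 H)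
    (hc : ∀ p, 0 < deriv (deriv H) p)
    (hsup : Tendsto (fun p : ℝ => H p / |p|) (cocompact ℝ) atTop)
    {k : ℝ} (hk : 0 ≤ k) (hlip : ∀ a b, uT a - uT b ≤ k * |a - b|) (y z : ℝ) :
    uT z - T * legendre1 H ((z - y)/T) ≤ uT y + T * max (H (k+1)) (H (-(k+1))) := by
  have h1 := legendre_superlinear hH hc hsup k ((z - y)/T)
  have h2 : T * ((k+1) * |(z - y)/T| - max (H (k+1)) (H (-(k+1)))) ≤ T * legendre1 H ((z - y)/T) :=
    mul_le_mul_of_nonneg_left h1 (le_of_lt hT)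
  have habs : T * |(z - y)/T| = |z - y| := by
    rw [abs_div, abs_of_pos hT]
    field_simp
  have h3 := hlip z y
  nlinarith [abs_nonneg (z - y)]

theorem splus_bound (hT : 0 < T) (hH : ContDiff ℝ 2 H)
    (hc : ∀ p, 0 < deriv (deriv H) p)
    (hsup : Tendsto (fun p : ℝ => H p / |p|) (cocompact ℝ) atTop)
    {u0 : ℝ → ℝ} {k : ℝ} (hk : 0 ≤ k) (hlip : ∀ a b, u0 a - u0 b ≤ k * |a - b|) (z y : ℝ) :
    u0 z - T * max (H (k+1)) (H (-(k+1))) + |z - y| ≤ u0 y + T * legendre1 H ((z - y)/T) := by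
  have h1 := legendre_superlinear hH hc hsup k ((z - y)/T)
  have h2 : T * ((k+1) * |(z - y)/T| - max (H (k+1)) (H (-(k+1)))) ≤ T * legendre1 H ((z - y)/T) :=
    mul_le_mul_of_nonneg_left h1 (le_of_lt hT)
  have habs : T * |(z - y)/T| = |z - y| := by
    rw [abs_div, abs_of_pos hT]
    field_simp
  have h3 := hlip z y
  nlinarith [abs_nonneg (z - y)]

theorem lip_of_lipschitzWith {f : ℝ → ℝ} {K : NNReal} (h : LipschitzWith K f) :
    ∀ a b, f a - f b ≤ (K : ℝ) * |a - b| := by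
  intro a b
  have := h.dist_le_mul a b
  rw [Real.dist_eq, Real.dist_eq] at this
  calc f a - f b ≤ |f a - f b| := le_abs_self _
    _ ≤ (K : ℝ) * |a - b| := this

theorem tendsto_abs_shift_cocompact (x0 : ℝ) :
    Tendsto (fun y : ℝ => |x0 - y|) (cocompact ℝ) atTop := by
  rw [cocompact_eq_atBot_atTop]
  rw [tendsto_sup]
  constructor
  · apply tendsto_atTop_mono (fun y : ℝ => le_abs_self (x0 - y))
    have h : Tendsto (fun y : ℝ => x0 + -y) atBot atTop :=
      tendsto_atTop_add_const_left _ x0 tendsto_neg_atBot_atTop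
    exact Tendsto.congr (fun y => (sub_eq_add_neg x0 y).symm) h
  · apply tendsto_atTop_mono (fun y : ℝ => neg_le_abs (x0 - y))
    have h : Tendsto (fun y : ℝ => y + -x0) atTop atTop :=
      tendsto_atTop_add_const_right _ (-x0) tendsto_id
    simpa [neg_sub, sub_eq_add_neg] using h

theorem star_of_reachable (hT : 0 < T) (hH : ContDiff ℝ 2 H)
    (hc : ∀ p, 0 < deriv (deriv H) p)
    (hsup : Tendsto (fun p : ℝ => H p / |p|) (cocompact ℝ) atTop)
    (h : ∃ u0 : ℝ → ℝ, IsLip1 u0 ∧ Splus1 T (legendre1 H) u0 = uT) :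
    Star1 T H uT := by
  obtain ⟨u0, ⟨K0, hlip0⟩, heq⟩ := h
  set k := (K0 : ℝ) with hk0
  have hk : (0:ℝ) ≤ k := K0.2
  have hl := lip_of_lipschitzWith hlip0
  set B := max (H (k+1)) (H (-(k+1))) with hB
  intro x0
  set f := fun y => u0 y + T * legendre1 H ((x0 - y)/T) with hf
  have hlb : ∀ z y : ℝ, u0 z - T * B + |z - y| ≤ u0 y + T * legendre1 H ((z - y)/T) :=
    fun z y => splus_bound hT hH hc hsup hk hl z y
  have hcont : Continuous f :=
    hlip0.continuous.add (continuous_const.mul ((legendre_cont hH hc hsup).comp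
      ((continuous_const.sub continuous_id).div_const T)))
  have hcoer : Tendsto f (cocompact ℝ) atTop := by
    apply tendsto_atTop_mono (fun y => hlb x0 y)
    exact tendsto_atTop_add_const_left _ _ (tendsto_abs_shift_cocompact x0)
  obtain ⟨y0, hy0⟩ := hcont.exists_forall_le hcoer
  have hBdd : BddBelow (Set.range f) := ⟨f y0, by rintro v ⟨y, rfl⟩; exact hy0 y⟩
  have huTx0 : uT x0 = f y0 := by
    rw [← heq]
    exact le_antisymm (ciInf_le hBdd y0) (le_ciInf hy0)
  refine ⟨y0, fun z => ?_⟩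
  have hBddz : BddBelow (Set.range (fun y => u0 y + T * legendre1 H ((z - y)/T))) := by
    refine ⟨u0 z - T * B, ?_⟩
    rintro v ⟨y, rfl⟩
    have := hlb z y
    have := abs_nonneg (z - y)
    linarith
  have h1 : uT z ≤ u0 y0 + T * legendre1 H ((z - y0)/T) := by
    rw [← heq]
    exact ciInf_le hBddz y0
  have h2 : u0 y0 + T * legendre1 H ((x0 - y0)/T) = uT x0 := huTx0.symm
  linarith

theorem reachable_of_star (hT : 0 < T) (hH : ContDiff ℝ 2 H)
    (hc : ∀ p, 0 < deriv (deriv H) p)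
    (hsup : Tendsto (fun p : ℝ => H p / |p|) (cocompact ℝ) atTop)
    (huT : IsLip1 uT) (hstar : Star1 T H uT) :
    ∃ u0 : ℝ → ℝ, IsLip1 u0 ∧ Splus1 T (legendre1 H) u0 = uT := by
  obtain ⟨K, hlip⟩ := huT
  set k := (K : ℝ) with hk0
  have hk : (0:ℝ) ≤ k := K.2
  have hl := lip_of_lipschitzWith hlip
  set B := max (H (k+1)) (H (-(k+1))) with hB
  set u0 := Sminus1 T (legendre1 H) uT with hu0
  have hbddA : ∀ y : ℝ, BddAbove (Set.range (fun z => uT z - T * legendre1 H ((z - y)/T))) := by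
    intro y
    refine ⟨uT y + T * B, ?_⟩
    rintro v ⟨z, rfl⟩
    exact sminus_bound hT hH hc hsup hk hl y z
  have hpt : ∀ x y : ℝ, uT x - T * legendre1 H ((x - y)/T) ≤ u0 y :=
    fun x y => le_ciSup (hbddA y) x
  -- Lipschitz bound for u0
  have hlip_u0 : ∀ x x' : ℝ, u0 x ≤ u0 x' + k * |x - x'| := by
    intro x x'
    apply ciSup_le
    intro z
    have h1 : uT (z + (x' - x)) - T * legendre1 H ((z + (x' - x) - x')/T) ≤ u0 x' :=
      hpt (z + (x' - x)) x'
    have h2 : (z + (x' - x) - x') = z - x := by ring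
    rw [h2] at h1
    have h3 : uT z - uT (z + (x' - x)) ≤ k * |x - x'| := by
      have := hl z (z + (x' - x))
      have habs : |z - (z + (x' - x))| = |x - x'| := by
        rw [show z - (z + (x' - x)) = x - x' by ring]
      rw [habs] at this
      exact this
    linarith
  have hlipu0 : IsLip1 u0 := by
    refine ⟨K, LipschitzWith.of_dist_le_mul (fun x x' => ?_)⟩
    rw [Real.dist_eq, Real.dist_eq, abs_sub_le_iff]
    constructor
    · have := hlip_u0 x x'; linarith
    · have := hlip_u0 x' x
      rw [abs_sub_comm] at this
      linarith
  refine ⟨u0, hlipu0, ?_⟩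
  funext x
  have hge : ∀ y : ℝ, uT x ≤ u0 y + T * legendre1 H ((x - y)/T) := by
    intro y
    have := hpt x y
    linarith
  apply le_antisymm
  · obtain ⟨ys, hys⟩ := hstar x
    have hsup_le : u0 ys ≤ uT x - T * legendre1 H ((x - ys)/T) := by
      apply ciSup_le
      intro z
      have := hys z
      linarith
  -- inf ≤ value at ys
    have hBddB : BddBelow (Set.range (fun y => u0 y + T * legendre1 H ((x - y)/T))) :=
      ⟨uT x, by rintro v ⟨y, rfl⟩; exact hge y⟩
    calc Splus1 T (legendre1 H) u0 x ≤ u0 ys + T * legendre1 H ((x - ys)/T) := ciInf_le hBddB ys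
      _ ≤ uT x := by linarith
  · exact le_ciInf hge

theorem visc_of_star (hT : 0 < T) (hH : ContDiff ℝ 2 H)
    (hc : ∀ p, 0 < deriv (deriv H) p)
    (hsup : Tendsto (fun p : ℝ => H p / |p|) (cocompact ℝ) atTop)
    (hstar : Star1 T H uT) : ViscIneq1 T H uT := by
  intro φ hφ x1 hmin
  obtain ⟨y, hy⟩ := hstar x1
  set ψ := fun x => uT x1 + T * legendre1 H ((x - y)/T) - T * legendre1 H ((x1 - y)/T) with hψ
  have hψx1 : ψ x1 = uT x1 := by simp [hψ]
  have hψge : ∀ z, uT z ≤ ψ z := hy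
  have hmin2 : IsLocalMin (fun x => ψ x - φ x) x1 := by
    apply hmin.mono
    intro x hx
    simp only at hx ⊢
    rw [hψx1]
    linarith [hψge x, hx]
  have hφdiff : ∀ x, HasDerivAt φ (deriv φ x) x :=
    fun x => ((hφ.differentiable (by norm_num)) x).hasDerivAt
  have hφ1 : ContDiff ℝ 1 (deriv φ) := contDiff_one_derivH hφ
  have hφ1diff : HasDerivAt (deriv φ) (deriv (deriv φ) x1) x1 :=
    ((hφ1.differentiable (by norm_num)) x1).hasDerivAt
  set q1 := (x1 - y)/T with hq1
  set gfun := fun x => Pfun H ((x - y)/T) - deriv φ x with hg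
  have hfd : ∀ x, HasDerivAt (fun x => ψ x - φ x) (gfun x) x := by
    intro x
    exact (shifted_legendre_hasDerivAt hT hH hc hsup (uT x1) (T * legendre1 H ((x1 - y)/T)) y x).sub
      (hφdiff x)
  have hPd : HasDerivAt (fun x => Pfun H ((x - y)/T))
      ((deriv (deriv H) (Pfun H q1))⁻¹ * (1/T)) x1 :=
    HasDerivAt.comp x1 (P_hasDerivAt hH hc hsup q1) (affine_hasDerivAt hT y x1)
  have hgd : HasDerivAt gfun ((deriv (deriv H) (Pfun H q1))⁻¹ * (1/T) - deriv (deriv φ) x1) x1 :=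
    hPd.sub hφ1diff
  obtain ⟨hzero, hnn⟩ := second_deriv_test hfd hgd hmin2
  have hslope : deriv φ x1 = Pfun H q1 := by
    simp only [hg] at hzero
    linarith [hzero]
  rw [hslope]
  have hpos := hc (Pfun H q1)
  rw [one_div, mul_comm T _, mul_inv]
  have : deriv (deriv φ) x1 ≤ (deriv (deriv H) (Pfun H q1))⁻¹ * (1/T) := by linarith
  rw [one_div] at this
  exact this

end Easy


/-- The key comparison machine: a cone cannot be crossed from above on both sides
of its touching point, given the viscosity inequality. -/
theorem no_double_cross {T : ℝ} {H uT : ℝ → ℝ} (hT : 0 < T) (hH : ContDiff ℝ 2 H)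
    (hc : ∀ p, 0 < deriv (deriv H) p)
    (hsup : Tendsto (fun p : ℝ => H p / |p|) (cocompact ℝ) atTop)
    (hcontu : Continuous uT) (hvisc : ViscIneq1 T H uT)
    {x0 p z1 z2 : ℝ} (hz1 : z1 < x0) (hz2 : x0 < z2)
    (h1 : cone1 T H uT x0 p z1 < uT z1) (h2 : cone1 T H uT x0 p z2 < uT z2) : False := by
  have hTne : T ≠ 0 := ne_of_gt hT
  set c := cone1 T H uT x0 p with hcdef
  set cs := fun x => Pfun H ((x - x0)/T + deriv H p) with hcs
  have hcd : ∀ x, HasDerivAt c (cs x) x := fun x => by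
    simp only [hcdef, hcs]; exact cone_hasDerivAt hT hH hc hsup uT x0 p x
  have hcs_cont : Continuous cs := by
    simp only [hcs]
    exact (P_cont hH hc hsup).comp
      (((continuous_id.sub continuous_const).div_const T).add continuous_const)
  have hcs_mono : StrictMono cs := by
    intro a b hab
    simp only [hcs]
    apply P_mono hH hc hsup
    have h : (a - x0)/T < (b - x0)/T := by
      apply div_lt_div_of_pos_right (by linarith) hT
    linarith
  have hc_cont : Continuous c := Differentiable.continuous fun x => (hcd x).differentiableAt
  set Xc := fun w => x0 + T * (deriv H w - deriv H p) with hXcdef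
  have hXc_cs : ∀ x, Xc (cs x) = x := by
    intro x
    simp only [hXcdef, hcs]
    rw [P_right hH hc hsup]
    field_simp
    ring
  have hcs_Xc : ∀ w, cs (Xc w) = w := by
    intro w
    simp only [hXcdef, hcs]
    have harg : (x0 + T * (deriv H w - deriv H p) - x0)/T + deriv H p = deriv H w := by
      field_simp
      ring
    rw [harg, P_left hH hc hsup]
  set p1 := cs z1 with hp1
  set M := cs (z2 + 1) with hM
  have hp1M : p1 < M := hcs_mono (by linarith)
  -- bounds for T * H'' on [p1, M]
  have hcontTH : Continuous (fun s => T * deriv (deriv H) s) :=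
    continuous_const.mul (continuous_derivH2 hH)
  obtain ⟨sB, hsBmem, hsBmax⟩ := isCompact_Icc.exists_isMaxOn
    (nonempty_Icc.mpr hp1M.le) hcontTH.continuousOn
  set B := T * deriv (deriv H) sB with hBdef
  have hBpos : 0 < B := mul_pos hT (hc sB)
  have hBub : ∀ s ∈ Icc p1 M, T * deriv (deriv H) s ≤ B := fun s hs => hsBmax hs
  obtain ⟨sb, hsbmem, hsbmin⟩ := isCompact_Icc.exists_isMinOn
    (nonempty_Icc.mpr hp1M.le) hcontTH.continuousOn
  set b0 := T * deriv (deriv H) sb with hb0def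
  have hb0pos : 0 < b0 := mul_pos hT (hc sb)
  have hb0lb : ∀ s ∈ Icc p1 M, b0 ≤ T * deriv (deriv H) s := fun s hs => hsbmin hs
  -- choice of ε
  set η := uT z2 - c z2 with hηdef
  have hηpos : 0 < η := by simp only [hηdef]; linarith
  set A := B^2 * (M - p1) with hAdef
  have hApos : 0 < A := by
    apply mul_pos (by positivity)
    linarith
  set ε := min A⁻¹ (η / (2 * (A * (M - p1)))) with hεdef
  have hεpos : 0 < ε := lt_min (by positivity) (div_pos hηpos (by nlinarith))
  set Cε := ε * A with hCεdef
  have hCεpos : 0 < Cε := mul_pos hεpos hApos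
  have hCε1 : Cε ≤ 1 := by
    have h := min_le_left A⁻¹ (η / (2 * (A * (M - p1))))
    have : ε * A ≤ A⁻¹ * A := by nlinarith
    rw [inv_mul_cancel₀ (ne_of_gt hApos)] at this
    simpa [hCεdef] using this
  have hdriftb : Cε * (M - p1) < η := by
    have h := min_le_right A⁻¹ (η / (2 * (A * (M - p1))))
    have hpos : 0 < 2 * (A * (M - p1)) := by nlinarith
    have h2 : ε * (2 * (A * (M - p1))) ≤ η := by
      calc ε * (2 * (A * (M - p1))) ≤ (η / (2 * (A * (M - p1)))) * (2 * (A * (M - p1))) := by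
            nlinarith
        _ = η := div_mul_cancel₀ η (ne_of_gt hpos)
    have h3 : 0 < ε * (A * (M - p1)) := by nlinarith
    simp only [hCεdef]
    nlinarith
  -- clamp and integrand
  set cl := fun s : ℝ => max p1 (min s M) with hcldef
  have hcl_mem : ∀ s, cl s ∈ Icc p1 M := fun s =>
    ⟨le_max_left _ _, max_le hp1M.le (min_le_right s M)⟩
  have hcl_id : ∀ s ∈ Icc p1 M, cl s = s := by
    intro s hs
    simp only [hcldef]
    rw [min_eq_left hs.2, max_eq_right hs.1]
  have hcl_cont : Continuous cl := continuous_const.max (continuous_id.min continuous_const)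
  set ι := fun s : ℝ => ((T * deriv (deriv H) (cl s))⁻¹ + ε)⁻¹ with hιdef
  have hTHpos : ∀ s : ℝ, 0 < T * deriv (deriv H) (cl s) := fun s => mul_pos hT (hc _)
  have hinner_pos : ∀ s, 0 < (T * deriv (deriv H) (cl s))⁻¹ + ε :=
    fun s => add_pos (inv_pos.mpr (hTHpos s)) hεpos
  have hι_pos : ∀ s, 0 < ι s := fun s => inv_pos.mpr (hinner_pos s)
  have hι_cont : Continuous ι := by
    apply Continuous.inv₀ _ (fun s => ne_of_gt (hinner_pos s))
    exact ((hcontTH.comp hcl_cont).inv₀ (fun s => ne_of_gt (hTHpos s))).add continuous_const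
  have hι_le : ∀ s : ℝ, ι s ≤ T * deriv (deriv H) (cl s) := by
    intro s
    have ha := hTHpos s
    calc ι s ≤ ((T * deriv (deriv H) (cl s))⁻¹)⁻¹ := by
          apply inv_anti₀ (inv_pos.mpr ha)
          linarith
      _ = T * deriv (deriv H) (cl s) := inv_inv _
  have hι_leB : ∀ s, ι s ≤ B := fun s => (hι_le s).trans (hBub _ (hcl_mem s))
  set ι0 := (b0⁻¹ + ε)⁻¹ with hι0def
  have hι0pos : 0 < ι0 := inv_pos.mpr (add_pos (inv_pos.mpr hb0pos) hεpos)
  have hι0_le : ∀ s, ι0 ≤ ι s := by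
    intro s
    apply inv_anti₀ (hinner_pos s)
    have h := hb0lb _ (hcl_mem s)
    have := inv_anti₀ hb0pos h
    linarith
  have hkey_up : ∀ s ∈ Icc p1 M, ι s ≤ T * deriv (deriv H) s := by
    intro s hs
    have := hι_le s
    rwa [hcl_id s hs] at this
  have hkey_lo : ∀ s ∈ Icc p1 M, T * deriv (deriv H) s - ε * B^2 ≤ ι s := by
    intro s hs
    have hcl' : cl s = s := hcl_id s hs
    simp only [hιdef, hcl']
    set a := T * deriv (deriv H) s with hadef
    have hapos : 0 < a := mul_pos hT (hc s)
    have haB : a ≤ B := by rw [hadef]; exact hBub s hs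
    have hform : (a⁻¹ + ε)⁻¹ = a / (1 + ε * a) := by
      have hsum : a⁻¹ + ε = (1 + ε * a)/a := by field_simp
      rw [hsum, inv_div]
    rw [hform, le_div_iff₀ (by positivity)]
    have hsq : a^2 ≤ B^2 := by nlinarith
    have h1 : ε * a^2 ≤ ε * B^2 := by nlinarith
    nlinarith [mul_pos hεpos hapos, mul_nonneg (mul_nonneg hεpos.le hεpos.le) (mul_nonneg hapos.le (sq_nonneg B))]
  -- the perturbed slope field X and its inverse W
  set X := fun w => z1 + ∫ s in p1..w, ι s with hXdef
  have hXd : ∀ w, HasDerivAt X (ι w) w := fun w =>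
    ((hι_cont.integral_hasStrictDerivAt p1 w).hasDerivAt).const_add z1
  have hX_cont : Continuous X := Differentiable.continuous fun w => (hXd w).differentiableAt
  have hX_mono : StrictMono X := strictMono_of_deriv_pos fun w => by
    rw [(hXd w).deriv]; exact hι_pos w
  have hX_lb : ∀ w, p1 ≤ w → z1 + ι0 * (w - p1) ≤ X w := by
    intro w hw
    have hint : ∫ _s in p1..w, ι0 ≤ ∫ s in p1..w, ι s :=
      intervalIntegral.integral_mono_on hw intervalIntegrable_const
        (hι_cont.intervalIntegrable _ _) (fun s _ => hι0_le s)
    rw [intervalIntegral.integral_const, smul_eq_mul] at hint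
    simp only [hXdef]
    nlinarith
  have hX_ub : ∀ w, w ≤ p1 → X w ≤ z1 + ι0 * (w - p1) := by
    intro w hw
    have hint : ∫ _s in w..p1, ι0 ≤ ∫ s in w..p1, ι s :=
      intervalIntegral.integral_mono_on hw intervalIntegrable_const
        (hι_cont.intervalIntegrable _ _) (fun s _ => hι0_le s)
    rw [intervalIntegral.integral_const, smul_eq_mul] at hint
    have hsymm : ∫ s in p1..w, ι s = -∫ s in w..p1, ι s :=
      (intervalIntegral.integral_symm w p1)
    simp only [hXdef]
    rw [hsymm]
    nlinarith
  have hXtop : Tendsto X atTop atTop := by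
    apply tendsto_atTop_mono' atTop ((eventually_ge_atTop p1).mono fun w hw => hX_lb w hw)
    apply tendsto_atTop_add_const_left
    apply Tendsto.const_mul_atTop hι0pos
    apply tendsto_atTop_add_const_right
    exact tendsto_id
  have hXbot : Tendsto X atBot atBot := by
    apply tendsto_atBot_mono' atBot ((eventually_le_atBot p1).mono fun w hw => hX_ub w hw)
    apply tendsto_atBot_add_const_left
    apply Tendsto.const_mul_atBot hι0pos
    apply tendsto_atBot_add_const_right
    exact tendsto_id
  have hX_surj : Function.Surjective X := hX_cont.surjective hXtop hXbot
  set W := Function.invFun X with hWdef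
  have hWX : ∀ y, X (W y) = y := invFun_rightInv hX_surj
  have hXW : ∀ w, W (X w) = w := invFun_leftInv hX_mono
  have hW_mono : StrictMono W := invFun_strictMono hX_mono hX_surj
  have hW_cont : Continuous W := invFun_continuous hX_mono hX_surj
  have hWd : ∀ y, HasDerivAt W (ι (W y))⁻¹ y := fun y =>
    invFun_hasDerivAt hX_mono hX_surj (hXd _) (ne_of_gt (hι_pos _))
  have hXp1 : X p1 = z1 := by simp [hXdef]
  have hWz1 : W z1 = p1 := by rw [← hXp1, hXW]
  -- comparison of X with the exact cone inverse Xc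
  have hXcp1 : Xc p1 = z1 := by rw [hp1, hXc_cs]
  have hXcint : ∀ w, Xc w = z1 + ∫ s in p1..w, T * deriv (deriv H) s := by
    intro w
    have hfz : ∫ s in p1..w, deriv (deriv H) s = deriv H w - deriv H p1 :=
      intervalIntegral.integral_eq_sub_of_hasDerivAt
        (fun s _ => hasDerivAt_derivH hH s) ((continuous_derivH2 hH).intervalIntegrable _ _)
    rw [intervalIntegral.integral_const_mul, hfz]
    have h0 : x0 + T * (deriv H p1 - deriv H p) = z1 := hXcp1
    simp only [hXcdef]
    nlinarith [h0]
  have hXleXc : ∀ w ∈ Icc p1 M, X w ≤ Xc w := by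
    intro w hw
    rw [hXcint]
    have hint : ∫ s in p1..w, ι s ≤ ∫ s in p1..w, T * deriv (deriv H) s :=
      intervalIntegral.integral_mono_on hw.1 (hι_cont.intervalIntegrable _ _)
        (hcontTH.intervalIntegrable _ _)
        (fun s hs => hkey_up s ⟨hs.1, hs.2.trans hw.2⟩)
    simp only [hXdef]
    linarith
  have hXcleX : ∀ w ∈ Icc p1 M, Xc w - Cε ≤ X w := by
    intro w hw
    rw [hXcint]
    have hint : ∫ s in p1..w, (T * deriv (deriv H) s - ε * B^2) ≤ ∫ s in p1..w, ι s :=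
      intervalIntegral.integral_mono_on hw.1
        ((hcontTH.sub continuous_const).intervalIntegrable _ _)
        (hι_cont.intervalIntegrable _ _)
        (fun s hs => hkey_lo s ⟨hs.1, hs.2.trans hw.2⟩)
    rw [intervalIntegral.integral_sub (hcontTH.intervalIntegrable _ _)
      (continuous_const.intervalIntegrable _ _), intervalIntegral.integral_const,
      smul_eq_mul] at hint
    have hwM : (w - p1) * (ε * B^2) ≤ Cε := by
      simp only [hCεdef, hAdef]
      have h1 : w - p1 ≤ M - p1 := by linarith [hw.2]
      have h2 : 0 ≤ ε * B^2 := by positivity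
      nlinarith [hw.1]
    simp only [hXdef]
    linarith
  -- a priori slope bounds on [z1, z2]
  have hXcM : Xc M = z2 + 1 := by rw [hM, hXc_cs]
  have hWz2M : W z2 ≤ M := by
    have hle : z2 ≤ X M := by
      have := hXcleX M ⟨hp1M.le, le_refl M⟩
      rw [hXcM] at this
      linarith
    have : X (W z2) ≤ X M := by rw [hWX]; exact hle
    exact hX_mono.le_iff_le.mp this
  have hWmem : ∀ x ∈ Icc z1 z2, W x ∈ Icc p1 M := fun x hx =>
    ⟨by rw [← hWz1]; exact hW_mono.monotone hx.1, le_trans (hW_mono.monotone hx.2) hWz2M⟩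
  have hcsmem : ∀ x ∈ Icc z1 z2, cs x ∈ Icc p1 M := fun x hx =>
    ⟨hcs_mono.monotone hx.1, hcs_mono.monotone (by linarith [hx.2])⟩
  have hcs_le_W : ∀ x ∈ Icc z1 z2, cs x ≤ W x := by
    intro x hx
    have h1 : X (cs x) ≤ Xc (cs x) := hXleXc _ (hcsmem x hx)
    rw [hXc_cs x] at h1
    have h2 := hW_mono.monotone h1
    rwa [hXW] at h2
  have hW_le_cs : ∀ x ∈ Icc z1 z2, W x ≤ cs (x + Cε) := by
    intro x hx
    have h1 : Xc (W x) - Cε ≤ X (W x) := hXcleX _ (hWmem x hx)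
    rw [hWX] at h1
    have h2 := hcs_mono.monotone (show Xc (W x) ≤ x + Cε by linarith)
    rwa [hcs_Xc] at h2
  -- the test function φ
  set φ := fun x => c z1 + ∫ t in z1..x, W t with hφdef
  have hφd : ∀ x, HasDerivAt φ (W x) x := fun x =>
    ((hW_cont.integral_hasStrictDerivAt z1 x).hasDerivAt).const_add (c z1)
  have hφz1 : φ z1 = c z1 := by simp [hφdef]
  have hφcont : Continuous φ := Differentiable.continuous fun x => (hφd x).differentiableAt
  have hderivφ : deriv φ = W := funext fun x => (hφd x).deriv
  have hφC2 : ContDiff ℝ 2 φ := by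
    have h2 : ContDiff ℝ ((1:ℕ∞)+1) φ := by
      rw [contDiff_succ_iff_deriv]
      refine ⟨fun x => (hφd x).differentiableAt, ?_, ?_⟩
      · intro h; exact absurd h (by norm_num)
      · rw [hderivφ]
        have hW1 : ContDiff ℝ 1 W := by
          rw [contDiff_one_iff_deriv]
          refine ⟨fun y => (hWd y).differentiableAt, ?_⟩
          have hdW : deriv W = fun y => (ι (W y))⁻¹ := funext fun y => (hWd y).deriv
          rw [hdW]
          exact ((hι_cont.comp hW_cont).inv₀ fun y => ne_of_gt (hι_pos _))
        exact_mod_cast hW1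
    exact_mod_cast h2
  -- FTC for the cone
  have hft : ∀ a b : ℝ, ∫ t in a..b, cs t = c b - c a := fun a b =>
    intervalIntegral.integral_eq_sub_of_hasDerivAt (fun x _ => hcd x)
      (hcs_cont.intervalIntegrable a b)
  -- φ ≥ c on [z1, z2]
  have hφ_ge : ∀ x ∈ Icc z1 z2, c x ≤ φ x := by
    intro x hx
    have hint : ∫ t in z1..x, cs t ≤ ∫ t in z1..x, W t :=
      intervalIntegral.integral_mono_on hx.1 (hcs_cont.intervalIntegrable _ _)
        (hW_cont.intervalIntegrable _ _) (fun t ht => hcs_le_W t ⟨ht.1, ht.2.trans hx.2⟩)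
    rw [hft z1 x] at hint
    simp only [hφdef]
    linarith
  -- drift bound
  have hdrift : φ z2 - c z2 ≤ Cε * (M - p1) := by
    have hint1 : ∫ t in z1..z2, W t ≤ ∫ t in z1..z2, cs (t + Cε) :=
      intervalIntegral.integral_mono_on (by linarith) (hW_cont.intervalIntegrable _ _)
        ((hcs_cont.comp (continuous_id.add continuous_const)).intervalIntegrable _ _)
        (fun t ht => hW_le_cs t ht)
    have hint2 : ∫ t in z1..z2, cs (t + Cε) = c (z2 + Cε) - c (z1 + Cε) := by
      apply intervalIntegral.integral_eq_sub_of_hasDerivAt (f := fun t => c (t + Cε))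
      · intro t _
        have hcomp := HasDerivAt.comp t (hcd (t + Cε)) ((hasDerivAt_id t).add_const Cε)
        rw [mul_one] at hcomp
        exact hcomp
      · exact (hcs_cont.comp (continuous_id.add continuous_const)).intervalIntegrable _ _
    have hint3 : c (z2 + Cε) - c z2 ≤ Cε * M := by
      have h' : ∫ t in z2..z2+Cε, cs t ≤ ∫ _t in z2..z2+Cε, M := by
        apply intervalIntegral.integral_mono_on (by linarith)
          (hcs_cont.intervalIntegrable _ _) intervalIntegrable_const
        intro t ht
        have : t ≤ z2 + 1 := by linarith [ht.2, hCε1]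
        calc cs t ≤ cs (z2 + 1) := hcs_mono.monotone this
          _ = M := hM.symm
      rw [hft, intervalIntegral.integral_const, smul_eq_mul] at h'
      nlinarith
    have hint4 : Cε * p1 ≤ c (z1 + Cε) - c z1 := by
      have h' : ∫ _t in z1..z1+Cε, p1 ≤ ∫ t in z1..z1+Cε, cs t := by
        apply intervalIntegral.integral_mono_on (by linarith) intervalIntegrable_const
          (hcs_cont.intervalIntegrable _ _)
        intro t ht
        calc p1 = cs z1 := hp1
          _ ≤ cs t := hcs_mono.monotone ht.1
      rw [hft, intervalIntegral.integral_const, smul_eq_mul] at h'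
      nlinarith
    have hφz2 : φ z2 = c z1 + ∫ t in z1..z2, W t := by simp [hφdef]
    rw [hφz2]
    linarith
  -- minimize uT - φ on [z1, z2]
  have hcontd : ContinuousOn (fun x => uT x - φ x) (Icc z1 z2) :=
    (hcontu.sub hφcont).continuousOn
  obtain ⟨xt, hxtmem, hxtmin⟩ := isCompact_Icc.exists_isMinOn
    (nonempty_Icc.mpr (by linarith)) hcontd
  have hx0mem : x0 ∈ Icc z1 z2 := ⟨hz1.le, hz2.le⟩
  have hval_x0 : uT x0 - φ x0 ≤ 0 := by
    have hg := hφ_ge x0 hx0mem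
    have hc0 : c x0 = uT x0 := cone_at uT x0 p
    linarith
  have hminval : uT xt - φ xt ≤ 0 := le_trans (hxtmin hx0mem) hval_x0
  have hend1 : 0 < uT z1 - φ z1 := by rw [hφz1]; linarith
  have hend2 : 0 < uT z2 - φ z2 := by
    have h := hdrift
    have h' := hdriftb
    simp only [hηdef] at h'
    linarith
  have hxt1 : xt ≠ z1 := by intro h; rw [h] at hminval; linarith
  have hxt2 : xt ≠ z2 := by intro h; rw [h] at hminval; linarith
  have hxtIoo : xt ∈ Ioo z1 z2 :=
    ⟨lt_of_le_of_ne hxtmem.1 (Ne.symm hxt1), lt_of_le_of_ne hxtmem.2 hxt2⟩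
  have hlocmin : IsLocalMin (fun x => uT x - φ x) xt :=
    hxtmin.isLocalMin (Icc_mem_nhds hxtIoo.1 hxtIoo.2)
  have hineq := hvisc φ hφC2 xt hlocmin
  have hdφ : deriv φ xt = W xt := by rw [hderivφ]
  have hdd : deriv (deriv φ) xt = (ι (W xt))⁻¹ := by rw [hderivφ]; exact (hWd xt).deriv
  rw [hdφ, hdd] at hineq
  have hWmemxt : W xt ∈ Icc p1 M := hWmem xt ⟨hxtIoo.1.le, hxtIoo.2.le⟩
  have hclW : cl (W xt) = W xt := hcl_id _ hWmemxt
  have hιval : ι (W xt) = ((T * deriv (deriv H) (W xt))⁻¹ + ε)⁻¹ := by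
    simp only [hιdef, hclW]
  rw [hιval, inv_inv, one_div] at hineq
  linarith


theorem star_of_visc {T : ℝ} {H uT : ℝ → ℝ} (hT : 0 < T) (hH : ContDiff ℝ 2 H)
    (hc : ∀ p, 0 < deriv (deriv H) p)
    (hsup : Tendsto (fun p : ℝ => H p / |p|) (cocompact ℝ) atTop)
    (huT : IsLip1 uT) (hvisc : ViscIneq1 T H uT) : Star1 T H uT := by
  obtain ⟨K, hlip⟩ := huT
  set k := (K : ℝ) with hk0
  have hk : (0:ℝ) ≤ k := K.2
  have hl := lip_of_lipschitzWith hlip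
  intro x0
  by_contra hns
  push_neg at hns
  set Pp := {p : ℝ | ∀ x : ℝ, x0 ≤ x → uT x ≤ cone1 T H uT x0 p x} with hPp
  set Pm := {p : ℝ | ∀ x : ℝ, x ≤ x0 → uT x ≤ cone1 T H uT x0 p x} with hPm
  have hdisj : ∀ p, p ∈ Pp → p ∈ Pm → False := by
    intro p hp hm
    obtain ⟨z, hz⟩ := hns (x0 - T * deriv H p)
    have harg1 : (z - (x0 - T * deriv H p))/T = (z - x0)/T + deriv H p := by
      field_simp; ring
    have harg2 : (x0 - (x0 - T * deriv H p))/T = deriv H p := by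
      field_simp
      ring
    rw [harg1, harg2] at hz
    have hcone : uT z ≤ cone1 T H uT x0 p z := by
      rcases le_or_gt x0 z with h | h
      · exact hp z h
      · exact hm z h.le
    have hexp : cone1 T H uT x0 p z
        = uT x0 + T * legendre1 H ((z - x0)/T + deriv H p) - T * legendre1 H (deriv H p) := by
      unfold cone1; ring
    rw [hexp] at hcone
    linarith
  have hkPp : k ∈ Pp := by
    intro x hx
    have hge := cone_ge hT hH hc hsup uT x0 k x
    have hlx := hl x x0
    rw [abs_of_nonneg (by linarith : (0:ℝ) ≤ x - x0)] at hlx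
    linarith
  have hkPm : -k ∈ Pm := by
    intro x hx
    have hge := cone_ge hT hH hc hsup uT x0 (-k) x
    have hlx := hl x x0
    rw [abs_of_nonpos (by linarith : x - x0 ≤ 0)] at hlx
    nlinarith
  have hclosed : ∀ (s : Set ℝ) (P : ℝ → ℝ → Prop),
      True → True := fun _ _ _ => trivial
  have hPpc : IsClosed Pp := by
    have heq : Pp = ⋂ x : ℝ, {p : ℝ | x0 ≤ x → uT x ≤ cone1 T H uT x0 p x} := by
      ext q
      simp only [hPp, Set.mem_setOf_eq, Set.mem_iInter]
    rw [heq]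
    apply isClosed_iInter
    intro x
    by_cases hx : x0 ≤ x
    · have : {p : ℝ | x0 ≤ x → uT x ≤ cone1 T H uT x0 p x}
          = {p : ℝ | uT x ≤ cone1 T H uT x0 p x} := by
        ext q; simp [hx]
      rw [this]
      exact isClosed_le continuous_const (cone_cont_p hT hH hc hsup uT x0 x)
    · have : {p : ℝ | x0 ≤ x → uT x ≤ cone1 T H uT x0 p x} = Set.univ := by
        ext q; simp [hx]
      rw [this]
      exact isClosed_univ
  have hPmc : IsClosed Pm := by
    have heq : Pm = ⋂ x : ℝ, {p : ℝ | x ≤ x0 → uT x ≤ cone1 T H uT x0 p x} := by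
      ext q
      simp only [hPm, Set.mem_setOf_eq, Set.mem_iInter]
    rw [heq]
    apply isClosed_iInter
    intro x
    by_cases hx : x ≤ x0
    · have : {p : ℝ | x ≤ x0 → uT x ≤ cone1 T H uT x0 p x}
          = {p : ℝ | uT x ≤ cone1 T H uT x0 p x} := by
        ext q; simp [hx]
      rw [this]
      exact isClosed_le continuous_const (cone_cont_p hT hH hc hsup uT x0 x)
    · have : {p : ℝ | x ≤ x0 → uT x ≤ cone1 T H uT x0 p x} = Set.univ := by
        ext q; simp [hx]
      rw [this]
      exact isClosed_univ
  set S := Pp ∩ Icc (-k) k with hS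
  have hSne : S.Nonempty := ⟨k, hkPp, ⟨by linarith, le_refl k⟩⟩
  have hSc : IsClosed S := hPpc.inter isClosed_Icc
  have hSbdd : BddBelow S := ⟨-k, fun q hq => hq.2.1⟩
  set ps := sInf S with hps
  have hpsS : ps ∈ S := hSc.csInf_mem hSne hSbdd
  have hpsPp : ps ∈ Pp := hpsS.1
  have hpsnm : ps ∉ Pm := fun h => hdisj ps hpsPp h
  have hpsgt : -k < ps := by
    rcases lt_or_eq_of_le hpsS.2.1 with h | h
    · exact h
    · exact absurd (h ▸ hkPm) (fun hmem => hdisj ps hpsPp hmem)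
  obtain ⟨δ, hδpos, hball⟩ := Metric.isOpen_iff.mp hPmc.isOpen_compl ps hpsnm
  set p := max ((-k + ps)/2) (ps - δ/2) with hpdef
  have hplt : p < ps := by
    apply max_lt
    · linarith
    · linarith
  have hpball : p ∈ Metric.ball ps δ := by
    rw [Metric.mem_ball, Real.dist_eq, abs_of_neg (by linarith : p - ps < 0)]
    have h2 : ps - δ/2 ≤ p := le_max_right _ _
    linarith
  have hpnm : p ∉ Pm := hball hpball
  have hpnp : p ∉ Pp := by
    intro hp
    have hpk : -k ≤ p := by
      have : (-k + ps)/2 ≤ p := le_max_left _ _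
      linarith
    have hpk2 : p ≤ k := by linarith [hpsS.2.2]
    have hmem : p ∈ S := ⟨hp, hpk, hpk2⟩
    have := csInf_le hSbdd hmem
    rw [← hps] at this
    linarith
  simp only [hPp, Set.mem_setOf_eq, not_forall] at hpnp
  obtain ⟨z2, hz2ge, hz2lt⟩ := hpnp
  push_neg at hz2lt
  simp only [hPm, Set.mem_setOf_eq, not_forall] at hpnm
  obtain ⟨z1, hz1le, hz1lt⟩ := hpnm
  push_neg at hz1lt
  have hz1ne : z1 ≠ x0 := by
    intro h
    rw [h, cone_at] at hz1lt
    exact lt_irrefl _ hz1lt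
  have hz2ne : z2 ≠ x0 := by
    intro h
    rw [h, cone_at] at hz2lt
    exact lt_irrefl _ hz2lt
  exact no_double_cross hT hH hc hsup hlip.continuous hvisc
    (lt_of_le_of_ne hz1le hz1ne) (lt_of_le_of_ne hz2ge (Ne.symm hz2ne)) hz1lt hz2lt

end Aux1D

/-- In one space dimension, `I_T(u_T)` is nonempty iff `u_T` satisfies
`∂ₓₓ u_T - (T·H''(∂ₓu_T))⁻¹ ≤ 0` in the viscosity sense. -/
theorem reachable_iff_viscosity_ineq_1D
    (T : ℝ) (hT : 0 < T)
    (H : ℝ → ℝ) (hH : ContDiff ℝ 2 H)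
    (hHconv : ∀ p : ℝ, 0 < deriv (deriv H) p)
    (hHsuper : Tendsto (fun p : ℝ => H p / |p|) (cocompact ℝ) atTop)
    (uT : ℝ → ℝ) (huT : IsLip1 uT) :
    (∃ u0 : ℝ → ℝ, IsLip1 u0 ∧ Splus1 T (legendre1 H) u0 = uT) ↔ ViscIneq1 T H uT := by
  constructor
  · intro h
    exact Aux1D.visc_of_star hT hH hHconv hHsuper
      (Aux1D.star_of_reachable hT hH hHconv hHsuper h)
  · intro h
    exact Aux1D.reachable_of_star hT hH hHconv hHsuper huT
      (Aux1D.star_of_visc hT hH hHconv hHsuper huT h)
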